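/- Let n, l, m, k be natural numbers, δ > 0, and ε, ε' ∈ (0,1). Suppose Scond : {0,1}^n → ({0,1}^l)² is a function such that for every (n,(1/2−δ)n)-source Y, the distribution Scond(Y) is ε'-close to a convex combination of distributions on ({0,1}^l)² in each of which at least one of the two coordinates has min-entropy at least (1/2+δ)l. Suppose nmExt : {0,1}^n × {0,1}^{l+1} → {0,1}^m is a (k,ε)-non-malleable extractor. Define TExt : {0,1}^n × {0,1}^n → {0,1}^m by TExt(x,y) = nmExt(x, Scond(y)_1 ∘ 0) ⊕ nmExt(x, Scond(y)_2 ∘ 1), where ∘ denotes concatenation of one bit and ⊕ is bitwise XOR. Then for every (n,(1/2−δ)n)-source Y and every (n,k)-source X independent of Y, the distribution TExt(X,Y) is (ε' + 2^{(1/2−δ)l+1}·ε)-close to U_m. -/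

import Mathlib

open Finset
open scoped Classical

noncomputable section

abbrev BS (n : ℕ) := Fin n → Bool

def uniformD (α : Type*) [Fintype α] : α → ℝ := fun _ => (Fintype.card α : ℝ)⁻¹

def prodD {α β : Type*} (p : α → ℝ) (q : β → ℝ) : α × β → ℝ := fun z => p z.1 * q z.2

def pushD {α β : Type*} [Fintype α] (f : α → β) (p : α → ℝ) : β → ℝ :=
  fun b => ∑ a, if f a = b then p a else 0

def SD {α : Type*} [Fintype α] (p q : α → ℝ) : ℝ := (∑ a, |p a - q a|) / 2

def IsDist {α : Type*} [Fintype α] (p : α → ℝ) : Prop := (∀ a, 0 ≤ p a) ∧ ∑ a, p a = 1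

def mEntGe {α : Type*} (p : α → ℝ) (k : ℝ) : Prop := ∀ a, p a ≤ (2:ℝ) ^ (-k)

def IsNME {X Y M : Type*} [Fintype X] [Fintype Y] [Fintype M]
    (E : X → Y → M) (k ε : ℝ) : Prop :=
  ∀ μX : X → ℝ, IsDist μX → mEntGe μX k →
    ∀ A : Y → Y, (∀ y, A y ≠ y) →
      SD (pushD (fun xy : X × Y => (E xy.1 xy.2, E xy.1 (A xy.2), xy.2)) (prodD μX (uniformD Y)))
         (prodD (uniformD M)
           (pushD (fun xy : X × Y => (E xy.1 (A xy.2), xy.2)) (prodD μX (uniformD Y)))) ≤ ε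

def IsNMEr {X Y M : Type*} [Fintype X] [Fintype Y] [Fintype M]
    (r : ℕ) (E : X → Y → M) (k ε : ℝ) : Prop :=
  ∀ μX : X → ℝ, IsDist μX → mEntGe μX k →
    ∀ A : Fin r → Y → Y, (∀ i y, A i y ≠ y) →
      SD (pushD (fun xy : X × Y =>
            (E xy.1 xy.2, fun i => E xy.1 (A i xy.2), xy.2)) (prodD μX (uniformD Y)))
         (prodD (uniformD M)
           (pushD (fun xy : X × Y =>
             ((fun i => E xy.1 (A i xy.2)), xy.2)) (prodD μX (uniformD Y)))) ≤ ε

set_option linter.unusedSectionVars false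

section helpers
variable {α β γ : Type*} [Fintype α] [Fintype β] [Fintype γ]

lemma sum_pushD (f : α → β) (p : α → ℝ) : ∑ b, pushD f p b = ∑ a, p a := by
  unfold pushD; rw [Finset.sum_comm]; simp

lemma pushD_nonneg (f : α → β) (p : α → ℝ) (hp : ∀ a, 0 ≤ p a) (b : β) : 0 ≤ pushD f p b := by
  apply Finset.sum_nonneg; intro a _; split <;> simp [hp a]

lemma pushD_comp (f : α → β) (g : β → γ) (p : α → ℝ) :
    pushD g (pushD f p) = pushD (g ∘ f) p := by
  funext c
  unfold pushD
  calc (∑ b, if g b = c then ∑ a, if f a = b then p a else 0 else 0)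
      = ∑ b, ∑ a, if g b = c then (if f a = b then p a else 0) else 0 := by
        apply Finset.sum_congr rfl; intro b _; split <;> simp
    _ = ∑ a, ∑ b, if g b = c then (if f a = b then p a else 0) else 0 := Finset.sum_comm
    _ = ∑ a, if (g ∘ f) a = c then p a else 0 := by
        apply Finset.sum_congr rfl; intro a _
        rw [Finset.sum_eq_single (f a)]
        · simp
        · intro b _ hb; simp [Ne.symm hb]
        · simp

lemma SD_nonneg (p q : α → ℝ) : 0 ≤ SD p q := by
  unfold SD; positivity

lemma SD_pushD_le (f : α → β) (p q : α → ℝ) : SD (pushD f p) (pushD f q) ≤ SD p q := by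
  unfold SD
  have h : ∑ b, |pushD f p b - pushD f q b| ≤ ∑ a, |p a - q a| := by
    calc ∑ b, |pushD f p b - pushD f q b|
        = ∑ b, |∑ a, if f a = b then p a - q a else 0| := by
          apply Finset.sum_congr rfl; intro b _
          unfold pushD
          rw [← Finset.sum_sub_distrib]
          congr 1; apply Finset.sum_congr rfl; intro a _; split <;> simp
      _ ≤ ∑ b, ∑ a, |if f a = b then p a - q a else 0| := by
          apply Finset.sum_le_sum; intro b _; exact Finset.abs_sum_le_sum_abs _ _
      _ = ∑ a, ∑ b, if f a = b then |p a - q a| else 0 := by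
          rw [Finset.sum_comm]
          apply Finset.sum_congr rfl; intro a _
          apply Finset.sum_congr rfl; intro b _; split <;> simp
      _ = ∑ a, |p a - q a| := by simp
  linarith

lemma SD_triangle (p q r : α → ℝ) : SD p r ≤ SD p q + SD q r := by
  unfold SD
  rw [← add_div]
  have : ∑ a, |p a - r a| ≤ ∑ a, |p a - q a| + ∑ a, |q a - r a| := by
    rw [← Finset.sum_add_distrib]
    apply Finset.sum_le_sum; intro a _
    calc |p a - r a| = |(p a - q a) + (q a - r a)| := by ring_nf
      _ ≤ |p a - q a| + |q a - r a| := abs_add_le _ _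
  linarith

lemma SD_prodD_left (μ : α → ℝ) (hμ : IsDist μ) (p q : β → ℝ) :
    SD (prodD μ p) (prodD μ q) ≤ SD p q := by
  unfold SD prodD
  have h : ∑ z : α × β, |μ z.1 * p z.2 - μ z.1 * q z.2| = ∑ b, |p b - q b| := by
    rw [Fintype.sum_prod_type]
    calc ∑ x, ∑ b, |μ x * p b - μ x * q b|
        = ∑ x, ∑ b, μ x * |p b - q b| := by
          apply Finset.sum_congr rfl; intro x _
          apply Finset.sum_congr rfl; intro b _
          rw [← mul_sub, abs_mul, abs_of_nonneg (hμ.1 x)]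
      _ = ∑ x, μ x * ∑ b, |p b - q b| := by
          apply Finset.sum_congr rfl; intro x _; rw [Finset.mul_sum]
      _ = ∑ b, |p b - q b| := by rw [← Finset.sum_mul, hμ.2, one_mul]
  rw [h]

lemma SD_mix {t : ℕ} (w : Fin t → ℝ) (P : Fin t → α → ℝ) (q : α → ℝ) (B : ℝ)
    (hw : ∀ i, 0 ≤ w i) (hw1 : ∑ i, w i = 1) (hB : ∀ i, SD (P i) q ≤ B) :
    SD (fun a => ∑ i, w i * P i a) q ≤ B := by
  unfold SD at *
  have h : ∑ a, |∑ i, w i * P i a - q a| ≤ ∑ a, ∑ i, w i * |P i a - q a| := by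
    apply Finset.sum_le_sum; intro a _
    calc |∑ i, w i * P i a - q a| = |∑ i, w i * (P i a - q a)| := by
          congr 1
          simp_rw [mul_sub]
          rw [Finset.sum_sub_distrib, ← Finset.sum_mul, hw1, one_mul]
      _ ≤ ∑ i, |w i * (P i a - q a)| := Finset.abs_sum_le_sum_abs _ _
      _ = ∑ i, w i * |P i a - q a| := by
          apply Finset.sum_congr rfl; intro i _; rw [abs_mul, abs_of_nonneg (hw i)]
  have h2 : ∑ a, ∑ i, w i * |P i a - q a| = ∑ i, w i * ∑ a, |P i a - q a| := by
    rw [Finset.sum_comm]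
    apply Finset.sum_congr rfl; intro i _
    rw [Finset.mul_sum]
  have h3 : ∑ i, w i * ∑ a, |P i a - q a| ≤ ∑ i, w i * (2 * B) := by
    apply Finset.sum_le_sum; intro i _
    have := hB i
    have h4 : ∑ a, |P i a - q a| ≤ 2 * B := by linarith
    exact mul_le_mul_of_nonneg_left h4 (hw i)
  have h5 : ∑ i, w i * (2 * B) = 2 * B := by rw [← Finset.sum_mul, hw1, one_mul]
  linarith

end helpers

section more
variable {α β γ : Type*} [Fintype α] [Fintype β] [Fintype γ]

lemma prodD_pushD_right (μ : α → ℝ) (f : β → γ) (p : β → ℝ) :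
    prodD μ (pushD f p) = pushD (Prod.map id f) (prodD μ p) := by
  funext z
  unfold prodD pushD
  rw [Fintype.sum_prod_type]
  rw [Finset.sum_eq_single z.1]
  · rw [Finset.mul_sum]
    apply Finset.sum_congr rfl; intro b _
    by_cases h : f b = z.2 <;> simp [Prod.ext_iff, h]
  · intro a _ ha
    apply Finset.sum_eq_zero; intro b _
    simp [Prod.ext_iff, ha]
  · simp

lemma pushD_mix {t : ℕ} (f : α → β) (w : Fin t → ℝ) (P : Fin t → α → ℝ) :
    pushD f (fun a => ∑ i, w i * P i a) = fun b => ∑ i, w i * pushD f (P i) b := by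
  funext b
  unfold pushD
  calc (∑ a, if f a = b then ∑ i, w i * P i a else 0)
      = ∑ a, ∑ i, if f a = b then w i * P i a else 0 := by
        apply Finset.sum_congr rfl; intro a _; split <;> simp
    _ = ∑ i, ∑ a, if f a = b then w i * P i a else 0 := Finset.sum_comm
    _ = ∑ i, w i * ∑ a, (if f a = b then P i a else 0) := by
        apply Finset.sum_congr rfl; intro i _
        rw [Finset.mul_sum]
        apply Finset.sum_congr rfl; intro a _; split <;> simp

lemma uniformD_BS (m : ℕ) (w : BS m) : uniformD (BS m) w = ((2:ℝ)^m)⁻¹ := by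
  unfold uniformD
  norm_num [Fintype.card_fun]

end more

section core
variable {n l m : ℕ}

def D2 (E : BS n → BS (l+1) → BS m) (μX : BS n → ℝ) (s t : BS (l+1)) : BS m × BS m → ℝ :=
  pushD (fun x => (E x s, E x t)) μX

def D1 (E : BS n → BS (l+1) → BS m) (μX : BS n → ℝ) (t : BS (l+1)) : BS m → ℝ :=
  pushD (fun x => E x t) μX

def Δp (E : BS n → BS (l+1) → BS m) (μX : BS n → ℝ) (s t : BS (l+1)) : ℝ :=
  SD (D2 E μX s t) (prodD (uniformD (BS m)) (D1 E μX t))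

lemma Δp_nonneg (E : BS n → BS (l+1) → BS m) (μX : BS n → ℝ) (s t : BS (l+1)) :
    0 ≤ Δp E μX s t := SD_nonneg _ _

lemma bool_xor_iff : ∀ a b c : Bool, (xor a b = c) ↔ (a = xor c b) := by decide

/-- Lemma B : xor step -/
lemma xor_step (E : BS n → BS (l+1) → BS m) (μX : BS n → ℝ) (hμX : IsDist μX)
    (s t : BS (l+1)) :
    SD (pushD (fun x => fun i => xor (E x s i) (E x t i)) μX) (uniformD (BS m))
      ≤ Δp E μX s t := by
  have h1 : pushD (fun x => fun i => xor (E x s i) (E x t i)) μX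
      = pushD (fun uv : BS m × BS m => fun i => xor (uv.1 i) (uv.2 i)) (D2 E μX s t) := by
    rw [D2, pushD_comp]; rfl
  have h2 : pushD (fun uv : BS m × BS m => fun i => xor (uv.1 i) (uv.2 i))
      (prodD (uniformD (BS m)) (D1 E μX t)) = uniformD (BS m) := by
    funext w
    unfold pushD prodD
    rw [Fintype.sum_prod_type]
    rw [Finset.sum_comm]
    have hin : ∀ v : BS m, ∑ u : BS m,
        (if (fun i => xor (u i) (v i)) = w then uniformD (BS m) u * D1 E μX t v else 0)
        = ((2:ℝ)^m)⁻¹ * D1 E μX t v := by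
      intro v
      rw [Finset.sum_eq_single (fun i => xor (w i) (v i))]
      · have : (fun i => xor (xor (w i) (v i)) (v i)) = w := by
          funext i; cases w i <;> cases v i <;> rfl
        simp [this, uniformD_BS]
      · intro u _ hu
        have : ¬ ((fun i => xor (u i) (v i)) = w) := by
          intro hc; apply hu; funext i
          have := congrFun hc i
          rw [bool_xor_iff] at this
          rw [this]
        simp [this]
      · simp
    simp only []
    rw [Finset.sum_congr rfl (fun v _ => hin v)]
    rw [← Finset.mul_sum]
    have : ∑ v, D1 E μX t v = 1 := by rw [D1, sum_pushD]; exact hμX.2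
    rw [this, mul_one, uniformD_BS]
  rw [h1, ← h2]
  exact SD_pushD_le _ _ _

end core

section lemA
variable {n l m : ℕ}

lemma nme_sum (E : BS n → BS (l+1) → BS m) (μX : BS n → ℝ)
    (A : BS (l+1) → BS (l+1)) (ε : ℝ)
    (hSD : SD (pushD (fun xy : BS n × BS (l+1) => (E xy.1 xy.2, E xy.1 (A xy.2), xy.2))
            (prodD μX (uniformD (BS (l+1)))))
         (prodD (uniformD (BS m))
           (pushD (fun xy : BS n × BS (l+1) => (E xy.1 (A xy.2), xy.2))
             (prodD μX (uniformD (BS (l+1)))))) ≤ ε) :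
    ∑ s : BS (l+1), Δp E μX s (A s) ≤ 2^(l+1) * ε := by
  set c : ℝ := ((2:ℝ)^(l+1))⁻¹ with hc
  have hc0 : 0 < c := by positivity
  set P := pushD (fun xy : BS n × BS (l+1) => (E xy.1 xy.2, E xy.1 (A xy.2), xy.2))
            (prodD μX (uniformD (BS (l+1)))) with hPdef
  set Q := prodD (uniformD (BS m))
           (pushD (fun xy : BS n × BS (l+1) => (E xy.1 (A xy.2), xy.2))
             (prodD μX (uniformD (BS (l+1))))) with hQdef
  have hP : ∀ (u v : BS m) (s : BS (l+1)), P (u, (v, s)) = c * D2 E μX s (A s) (u, v) := by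
    intro u v s
    rw [hPdef]
    unfold D2 pushD prodD
    rw [Fintype.sum_prod_type]
    simp only []
    rw [Finset.mul_sum]
    apply Finset.sum_congr rfl; intro x _
    rw [Finset.sum_eq_single s]
    · rw [uniformD_BS]
      by_cases h1 : E x s = u <;> by_cases h2 : E x (A s) = v <;>
        simp [Prod.ext_iff, h1, h2, mul_comm, hc]
    · intro y _ hy; simp [Prod.ext_iff, hy]
    · simp
  have hQ : ∀ (u v : BS m) (s : BS (l+1)),
      Q (u, (v, s)) = c * (prodD (uniformD (BS m)) (D1 E μX (A s)) (u, v)) := by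
    intro u v s
    rw [hQdef]
    unfold D1 pushD prodD
    simp only []
    rw [Fintype.sum_prod_type]
    simp only []
    have hin : (∑ x, ∑ y, if (E x (A y), y) = (v, s) then μX x * uniformD (BS (l+1)) y else 0)
        = c * ∑ x, (if E x (A s) = v then μX x else 0) := by
      rw [Finset.mul_sum]
      apply Finset.sum_congr rfl; intro x _
      rw [Finset.sum_eq_single s]
      · rw [uniformD_BS]
        by_cases h2 : E x (A s) = v <;> simp [Prod.ext_iff, h2, mul_comm, hc]
      · intro y _ hy; simp [Prod.ext_iff, hy]
      · simp
    rw [hin]; ring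
  have hval : ∀ z : BS m × (BS m × BS (l+1)), |P z - Q z| =
      c * |D2 E μX z.2.2 (A z.2.2) (z.1, z.2.1)
           - prodD (uniformD (BS m)) (D1 E μX (A z.2.2)) (z.1, z.2.1)| := by
    rintro ⟨u, v, s⟩
    rw [hP u v s, hQ u v s, ← mul_sub, abs_mul, abs_of_pos hc0]
  have hsum : ∑ z : BS m × (BS m × BS (l+1)), |P z - Q z|
      = c * ∑ s : BS (l+1), (2 * Δp E μX s (A s)) := by
    rw [Finset.sum_congr rfl (fun z _ => hval z)]
    rw [← Finset.mul_sum]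
    congr 1
    rw [Fintype.sum_prod_type]
    simp only []
    have hswap : ∀ u : BS m, (∑ vs : BS m × BS (l+1),
        |D2 E μX vs.2 (A vs.2) (u, vs.1) - prodD (uniformD (BS m)) (D1 E μX (A vs.2)) (u, vs.1)|)
        = ∑ s : BS (l+1), ∑ v : BS m,
          |D2 E μX s (A s) (u, v) - prodD (uniformD (BS m)) (D1 E μX (A s)) (u, v)| := by
      intro u
      rw [Fintype.sum_prod_type]
      simp only []
      exact Finset.sum_comm
    rw [Finset.sum_congr rfl (fun u _ => hswap u)]
    rw [Finset.sum_comm]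
    apply Finset.sum_congr rfl; intro s _
    have : Δp E μX s (A s) = (∑ uv : BS m × BS m,
        |D2 E μX s (A s) uv - prodD (uniformD (BS m)) (D1 E μX (A s)) uv|) / 2 := rfl
    rw [this]
    rw [Fintype.sum_prod_type]
    ring
  have hSD2 : SD P Q = c * ∑ s : BS (l+1), Δp E μX s (A s) := by
    unfold SD
    rw [hsum, Finset.mul_sum]
    rw [Finset.sum_div]
    rw [Finset.mul_sum]
    apply Finset.sum_congr rfl; intro s _
    ring
  rw [hSD2] at hSD
  calc ∑ s : BS (l+1), Δp E μX s (A s) = c⁻¹ * (c * ∑ s : BS (l+1), Δp E μX s (A s)) := by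
        field_simp
    _ ≤ c⁻¹ * ε := by
        apply mul_le_mul_of_nonneg_left hSD (by positivity)
    _ = 2^(l+1) * ε := by rw [hc]; simp
end lemA

section mix'
variable {α ι : Type*} [Fintype α] [Fintype ι]

lemma SD_mix' (w : ι → ℝ) (P : ι → α → ℝ) (q : α → ℝ)
    (hw : ∀ i, 0 ≤ w i) (hw1 : ∑ i, w i = 1) :
    SD (fun a => ∑ i, w i * P i a) q ≤ ∑ i, w i * SD (P i) q := by
  unfold SD
  have h : ∑ a, |∑ i, w i * P i a - q a| ≤ ∑ a, ∑ i, w i * |P i a - q a| := by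
    apply Finset.sum_le_sum; intro a _
    calc |∑ i, w i * P i a - q a| = |∑ i, w i * (P i a - q a)| := by
          congr 1
          simp_rw [mul_sub]
          rw [Finset.sum_sub_distrib, ← Finset.sum_mul, hw1, one_mul]
      _ ≤ ∑ i, |w i * (P i a - q a)| := Finset.abs_sum_le_sum_abs _ _
      _ = ∑ i, w i * |P i a - q a| := by
          apply Finset.sum_congr rfl; intro i _; rw [abs_mul, abs_of_nonneg (hw i)]
  have h2 : ∑ a, ∑ i, w i * |P i a - q a| = ∑ i, w i * ∑ a, |P i a - q a| := by
    rw [Finset.sum_comm]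
    apply Finset.sum_congr rfl; intro i _
    rw [Finset.mul_sum]
  have h3 : ∑ i, w i * ((∑ a, |P i a - q a|) / 2) = (∑ i, w i * ∑ a, |P i a - q a|) / 2 := by
    rw [Finset.sum_div]
    apply Finset.sum_congr rfl; intro i _; ring
  rw [h3]
  rw [← h2]
  linarith

end mix'

section corelem
variable {n l m : ℕ}

lemma snoc_inj (b : Bool) : Function.Injective (fun y : BS l => Fin.snoc y b : BS l → BS (l+1)) := by
  intro y y' h
  have := congrArg Fin.init h
  simpa [Fin.init_snoc] using this

lemma core_bound (E : BS n → BS (l+1) → BS m) (μX : BS n → ℝ)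
    (hμX : IsDist μX) (k ε : ℝ) (hk : mEntGe μX k) (hε : 0 ≤ ε)
    (hnm : IsNME E k ε) (b : Bool)
    (p : BS l × BS l → ℝ) (hp : IsDist p) (h : ℝ)
    (hph : mEntGe (pushD Prod.fst p) h) :
    SD (pushD (fun xz : BS n × (BS l × BS l) => fun i : Fin m =>
          xor (E xz.1 (Fin.snoc xz.2.1 b) i) (E xz.1 (Fin.snoc xz.2.2 (!b)) i))
        (prodD μX p)) (uniformD (BS m))
      ≤ 2^(l+1) * (2:ℝ)^(-h) * ε := by
  classical
  -- the per-pair output distribution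
  set Qz : BS l × BS l → BS m → ℝ := fun z =>
    pushD (fun x => fun i : Fin m =>
      xor (E x (Fin.snoc z.1 b) i) (E x (Fin.snoc z.2 (!b)) i)) μX with hQz
  -- Step 1 : decomposition of the output distribution
  have hdecomp : pushD (fun xz : BS n × (BS l × BS l) => fun i : Fin m =>
          xor (E xz.1 (Fin.snoc xz.2.1 b) i) (E xz.1 (Fin.snoc xz.2.2 (!b)) i))
        (prodD μX p) = fun u => ∑ z : BS l × BS l, p z * Qz z u := by
    funext u
    unfold pushD prodD
    rw [Fintype.sum_prod_type]
    simp only []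
    rw [Finset.sum_comm]
    apply Finset.sum_congr rfl; intro z _
    rw [hQz]
    unfold pushD
    rw [Finset.mul_sum]
    apply Finset.sum_congr rfl; intro x _
    split <;> ring
  -- abbreviation for the per-pair SD bound
  set Δz : BS l × BS l → ℝ := fun z => Δp E μX (Fin.snoc z.1 b) (Fin.snoc z.2 (!b)) with hΔz
  have hΔznn : ∀ z, 0 ≤ Δz z := fun z => Δp_nonneg _ _ _ _
  -- Step 2 : SD bound via convexity + xor step
  have hstep2 : SD (fun u => ∑ z : BS l × BS l, p z * Qz z u) (uniformD (BS m))
      ≤ ∑ z : BS l × BS l, p z * Δz z := by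
    calc SD (fun u => ∑ z : BS l × BS l, p z * Qz z u) (uniformD (BS m))
        ≤ ∑ z : BS l × BS l, p z * SD (Qz z) (uniformD (BS m)) :=
          SD_mix' p Qz _ hp.1 hp.2
      _ ≤ ∑ z : BS l × BS l, p z * Δz z := by
          apply Finset.sum_le_sum; intro z _
          exact mul_le_mul_of_nonneg_left (xor_step E μX hμX _ _) (hp.1 z)
  -- conditional distribution
  set p1 : BS l → ℝ := pushD Prod.fst p with hp1
  have hp1_apply : ∀ y1, p1 y1 = ∑ y2, p (y1, y2) := by
    intro y1
    rw [hp1]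
    unfold pushD
    rw [Fintype.sum_prod_type]
    rw [Finset.sum_eq_single y1]
    · simp
    · intro a _ ha
      apply Finset.sum_eq_zero; intro y2 _; simp [ha]
    · simp
  have hp1nn : ∀ y1, 0 ≤ p1 y1 := pushD_nonneg _ _ hp.1
  have hpz_zero : ∀ y1 y2, p1 y1 = 0 → p (y1, y2) = 0 := by
    intro y1 y2 h0
    rw [hp1_apply] at h0
    have := (Finset.sum_eq_zero_iff_of_nonneg (fun y2 _ => hp.1 (y1, y2))).1 h0
    exact this y2 (Finset.mem_univ _)
  set c : BS l → BS l → ℝ := fun y1 y2 =>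
    if p1 y1 = 0 then (if y2 = y1 then 1 else 0) else p (y1, y2) / p1 y1 with hcdef
  have hcnn : ∀ y1 y2, 0 ≤ c y1 y2 := by
    intro y1 y2
    simp only [hcdef]
    split
    · split <;> norm_num
    · exact div_nonneg (hp.1 _) (hp1nn _)
  have hcsum : ∀ y1, ∑ y2, c y1 y2 = 1 := by
    intro y1
    simp only [hcdef]
    by_cases h0 : p1 y1 = 0
    · simp [h0]
    · simp only [h0, if_false]
      rw [← Finset.sum_div, ← hp1_apply y1, div_self h0]
  have hfact : ∀ y1 y2, p (y1, y2) = p1 y1 * c y1 y2 := by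
    intro y1 y2
    simp only [hcdef]
    by_cases h0 : p1 y1 = 0
    · simp [h0, hpz_zero y1 y2 h0]
    · rw [if_neg h0, mul_div_assoc', mul_div_cancel_left₀ _ h0]
  -- Step 4a : per-function adversary bound
  have hperf : ∀ f : BS l → BS l,
      ∑ y1 : BS l, Δz (y1, f y1) ≤ 2^(l+1) * ε := by
    intro f
    set A : BS (l+1) → BS (l+1) := fun s =>
      if s (Fin.last l) = b then Fin.snoc (f (Fin.init s)) (!b) else Fin.snoc (Fin.init s) b
      with hA
    have hAne : ∀ s, A s ≠ s := by
      intro s hcon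
      simp only [hA] at hcon
      by_cases hs : s (Fin.last l) = b
      · rw [if_pos hs] at hcon
        have := congrFun hcon (Fin.last l)
        rw [Fin.snoc_last] at this
        rw [hs] at this
        exact Bool.not_ne_self b this
      · rw [if_neg hs] at hcon
        have := congrFun hcon (Fin.last l)
        rw [Fin.snoc_last] at this
        exact hs this.symm
    have hAs : ∀ y : BS l, A (Fin.snoc y b) = Fin.snoc (f y) (!b) := by
      intro y
      simp only [hA]
      simp [Fin.snoc_last, Fin.init_snoc]
    have h1 : ∑ y1 : BS l, Δz (y1, f y1)
        = ∑ y1 : BS l, Δp E μX (Fin.snoc y1 b) (A (Fin.snoc y1 b)) := by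
      apply Finset.sum_congr rfl; intro y1 _
      rw [hAs y1]
    have h2 : ∑ y1 : BS l, Δp E μX (Fin.snoc y1 b) (A (Fin.snoc y1 b))
        ≤ ∑ s : BS (l+1), Δp E μX s (A s) := by
      have himg := Finset.sum_image (s := (Finset.univ : Finset (BS l)))
        (f := fun t : BS (l+1) => Δp E μX t (A t))
        (g := fun y : BS l => (Fin.snoc y b : BS (l+1)))
        (fun x _ y _ hxy => snoc_inj b hxy)
      rw [← himg]
      apply Finset.sum_le_sum_of_subset_of_nonneg (Finset.subset_univ _)
      intro t _ _
      exact Δp_nonneg _ _ _ _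
    have h3 := nme_sum E μX A ε (hnm μX hμX hk A hAne)
    rw [h1]
    exact h2.trans h3
  -- Step 4b : function decomposition
  set Δ' : BS l → BS l → ℝ := fun y1 y2 => Δz (y1, y2) with hΔ'
  have hkey : ∑ f : BS l → BS l, (∏ y, c y (f y)) * (∑ y1, Δ' y1 (f y1))
      = ∑ y1, ∑ y2, c y1 y2 * Δ' y1 y2 := by
    calc ∑ f : BS l → BS l, (∏ y, c y (f y)) * (∑ y1, Δ' y1 (f y1))
        = ∑ f : BS l → BS l, ∑ y1, (∏ y, c y (f y)) * Δ' y1 (f y1) := by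
          apply Finset.sum_congr rfl; intro f _; rw [Finset.mul_sum]
      _ = ∑ y1, ∑ f : BS l → BS l, (∏ y, c y (f y)) * Δ' y1 (f y1) := Finset.sum_comm
      _ = ∑ y1, ∑ y2, c y1 y2 * Δ' y1 y2 := by
          apply Finset.sum_congr rfl; intro y1 _
          set hfun : BS l → BS l → ℝ := fun y v => if y = y1 then c y v * Δ' y1 v else c y v
            with hhfun
          have hstep : ∀ f : BS l → BS l,
              (∏ y, c y (f y)) * Δ' y1 (f y1) = ∏ y, hfun y (f y) := by
            intro f
            rw [← Finset.prod_erase_mul Finset.univ _ (Finset.mem_univ y1),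
                ← Finset.prod_erase_mul Finset.univ (fun y => hfun y (f y)) (Finset.mem_univ y1)]
            have he : ∏ y ∈ Finset.univ.erase y1, hfun y (f y)
                = ∏ y ∈ Finset.univ.erase y1, c y (f y) := by
              apply Finset.prod_congr rfl; intro y hy
              simp only [hhfun]
              simp [Finset.ne_of_mem_erase hy]
            rw [he]
            simp only [hhfun, if_pos rfl]
            ring
          rw [Finset.sum_congr rfl (fun f _ => hstep f)]
          rw [← Fintype.prod_sum]
          rw [← Finset.prod_erase_mul Finset.univ _ (Finset.mem_univ y1)]
          have he1 : ∏ y ∈ Finset.univ.erase y1, (∑ v, hfun y v) = 1 := by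
            apply Finset.prod_eq_one; intro y hy
            simp only [hhfun, Finset.ne_of_mem_erase hy, if_false]
            exact hcsum y
          rw [he1, one_mul]
          simp only [hhfun, if_pos rfl]
  have hlam1 : ∑ f : BS l → BS l, ∏ y, c y (f y) = 1 := by
    rw [← Fintype.prod_sum]
    apply Finset.prod_eq_one; intro y _
    exact hcsum y
  have hlamnn : ∀ f : BS l → BS l, 0 ≤ ∏ y, c y (f y) := by
    intro f; exact Finset.prod_nonneg fun y _ => hcnn y (f y)
  -- Step 3 : entropy bound
  have hstep3 : ∑ z : BS l × BS l, p z * Δz z ≤ (2:ℝ)^(-h) * ∑ y1, ∑ y2, c y1 y2 * Δ' y1 y2 := by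
    rw [Fintype.sum_prod_type, Finset.mul_sum]
    apply Finset.sum_le_sum; intro y1 _
    rw [Finset.mul_sum]
    apply Finset.sum_le_sum; intro y2 _
    have : p (y1, y2) * Δz (y1, y2) = p1 y1 * (c y1 y2 * Δ' y1 y2) := by
      rw [hfact y1 y2]; simp only [hΔ']; ring
    rw [this]
    have hcd : 0 ≤ c y1 y2 * Δ' y1 y2 := mul_nonneg (hcnn y1 y2) (hΔznn (y1, y2))
    have h24 : (2:ℝ)^(-h) * (c y1 y2 * Δ' y1 y2) = c y1 y2 * Δ' y1 y2 * (2:ℝ)^(-h) := by ring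
    calc p1 y1 * (c y1 y2 * Δ' y1 y2) ≤ (2:ℝ)^(-h) * (c y1 y2 * Δ' y1 y2) :=
          mul_le_mul_of_nonneg_right (hph y1) hcd
      _ = (2:ℝ)^(-h) * (c y1 y2 * Δ' y1 y2) := rfl
  have hstep4 : ∑ y1, ∑ y2, c y1 y2 * Δ' y1 y2 ≤ 2^(l+1) * ε := by
    rw [← hkey]
    calc ∑ f : BS l → BS l, (∏ y, c y (f y)) * (∑ y1, Δ' y1 (f y1))
        ≤ ∑ f : BS l → BS l, (∏ y, c y (f y)) * (2^(l+1) * ε) := by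
          apply Finset.sum_le_sum; intro f _
          exact mul_le_mul_of_nonneg_left (hperf f) (hlamnn f)
      _ = 2^(l+1) * ε := by rw [← Finset.sum_mul, hlam1, one_mul]
  -- assemble
  rw [hdecomp]
  calc SD (fun u => ∑ z : BS l × BS l, p z * Qz z u) (uniformD (BS m))
      ≤ ∑ z : BS l × BS l, p z * Δz z := hstep2
    _ ≤ (2:ℝ)^(-h) * ∑ y1, ∑ y2, c y1 y2 * Δ' y1 y2 := hstep3
    _ ≤ (2:ℝ)^(-h) * (2^(l+1) * ε) := by
        apply mul_le_mul_of_nonneg_left hstep4 (by positivity)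
    _ = 2^(l+1) * (2:ℝ)^(-h) * ε := by ring

end corelem


theorem stmt_7
    (n l m k : ℕ) (δ ε ε' : ℝ) (hδ : 0 < δ)
    (hε0 : 0 < ε) (hε1 : ε < 1) (hε'0 : 0 < ε') (hε'1 : ε' < 1)
    (Scond : BS n → BS l × BS l)
    (hScond : ∀ μY : BS n → ℝ, IsDist μY → mEntGe μY ((1/2 - δ) * n) →
      ∃ (t : ℕ) (w : Fin t → ℝ) (D : Fin t → (BS l × BS l → ℝ)),
        (∀ i, 0 ≤ w i) ∧ (∑ i, w i = 1) ∧ (∀ i, IsDist (D i)) ∧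
        (∀ i, mEntGe (pushD Prod.fst (D i)) ((1/2 + δ) * l) ∨
              mEntGe (pushD Prod.snd (D i)) ((1/2 + δ) * l)) ∧
        SD (pushD Scond μY) (fun z => ∑ i, w i * D i z) ≤ ε')
    (nmExt : BS n → BS (l + 1) → BS m)
    (hnm : IsNME nmExt (k:ℝ) ε) :
    ∀ (μX μY : BS n → ℝ),
      IsDist μX → mEntGe μX (k:ℝ) → IsDist μY → mEntGe μY ((1/2 - δ) * n) →
      SD (pushD (fun xy : BS n × BS n => fun i : Fin m =>
            xor (nmExt xy.1 (Fin.snoc (Scond xy.2).1 false) i)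
                (nmExt xy.1 (Fin.snoc (Scond xy.2).2 true) i))
           (prodD μX μY))
         (uniformD (BS m))
        ≤ ε' + (2:ℝ) ^ ((1/2 - δ) * l + 1) * ε := by
  intro μX μY hXd hXk hYd hYm
  have hε : 0 ≤ ε := le_of_lt hε0
  obtain ⟨t, w, D, hw0, hw1, hDdist, hDent, hSDsc⟩ := hScond μY hYd hYm
  set gfun : BS n × (BS l × BS l) → BS m := fun xz => fun i : Fin m =>
    xor (nmExt xz.1 (Fin.snoc xz.2.1 false) i) (nmExt xz.1 (Fin.snoc xz.2.2 true) i) with hgfun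
  set pS := pushD Scond μY with hpS
  set mix : BS l × BS l → ℝ := fun z => ∑ i, w i * D i z with hmix
  have h0 : pushD (fun xy : BS n × BS n => fun i : Fin m =>
            xor (nmExt xy.1 (Fin.snoc (Scond xy.2).1 false) i)
                (nmExt xy.1 (Fin.snoc (Scond xy.2).2 true) i)) (prodD μX μY)
      = pushD gfun (prodD μX pS) := by
    rw [hpS, prodD_pushD_right, pushD_comp]
    have hfn0 : (gfun ∘ Prod.map id Scond) = (fun xy : BS n × BS n => fun i : Fin m =>
            xor (nmExt xy.1 (Fin.snoc (Scond xy.2).1 false) i)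
                (nmExt xy.1 (Fin.snoc (Scond xy.2).2 true) i)) := by
      funext xy
      rfl
    rw [hfn0]
  have hB : ∀ i0 : Fin t, SD (pushD gfun (prodD μX (D i0))) (uniformD (BS m))
      ≤ 2^(l+1) * (2:ℝ)^(-((1/2+δ)*(l:ℝ))) * ε := by
    intro i0
    rcases hDent i0 with hfst | hsnd
    · exact core_bound nmExt μX hXd k ε hXk hε hnm false (D i0) (hDdist i0) ((1/2+δ)*(l:ℝ)) hfst
    · have hps' : IsDist (pushD Prod.swap (D i0)) :=
        ⟨pushD_nonneg _ _ (hDdist i0).1, by rw [sum_pushD]; exact (hDdist i0).2⟩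
      have hent' : mEntGe (pushD Prod.fst (pushD Prod.swap (D i0))) ((1/2+δ)*(l:ℝ)) := by
        rw [pushD_comp]
        have hc : (Prod.fst ∘ Prod.swap : BS l × BS l → BS l) = Prod.snd := by funext z; rfl
        rw [hc]; exact hsnd
      have hcore := core_bound nmExt μX hXd k ε hXk hε hnm true
        (pushD Prod.swap (D i0)) hps' ((1/2+δ)*(l:ℝ)) hent'
      have heq : pushD (fun xz : BS n × (BS l × BS l) => fun i : Fin m =>
            xor (nmExt xz.1 (Fin.snoc xz.2.1 true) i) (nmExt xz.1 (Fin.snoc xz.2.2 (!true)) i))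
          (prodD μX (pushD Prod.swap (D i0)))
          = pushD gfun (prodD μX (D i0)) := by
        rw [prodD_pushD_right, pushD_comp]
        have hfn : ((fun xz : BS n × (BS l × BS l) => fun i : Fin m =>
            xor (nmExt xz.1 (Fin.snoc xz.2.1 true) i) (nmExt xz.1 (Fin.snoc xz.2.2 (!true)) i))
              ∘ Prod.map id Prod.swap) = gfun := by
          funext xz j
          show xor (nmExt xz.1 (Fin.snoc xz.2.2 true) j) (nmExt xz.1 (Fin.snoc xz.2.1 false) j)
            = xor (nmExt xz.1 (Fin.snoc xz.2.1 false) j) (nmExt xz.1 (Fin.snoc xz.2.2 true) j)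
          exact Bool.xor_comm _ _
        rw [hfn]
      rw [← heq]
      exact hcore
  rw [h0]
  have htri := SD_triangle (pushD gfun (prodD μX pS)) (pushD gfun (prodD μX mix))
    (uniformD (BS m))
  have h1 : SD (pushD gfun (prodD μX pS)) (pushD gfun (prodD μX mix)) ≤ ε' :=
    le_trans (SD_pushD_le _ _ _) (le_trans (SD_prodD_left μX hXd _ _) hSDsc)
  have h2 : SD (pushD gfun (prodD μX mix)) (uniformD (BS m))
      ≤ 2^(l+1) * (2:ℝ)^(-((1/2+δ)*(l:ℝ))) * ε := by
    have hprod : prodD μX mix = fun xz => ∑ i0, w i0 * prodD μX (D i0) xz := by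
      funext xz
      rw [hmix]
      unfold prodD
      simp only []
      rw [Finset.mul_sum]
      apply Finset.sum_congr rfl; intro i0 _; ring
    rw [hprod, pushD_mix]
    exact SD_mix w (fun i0 => pushD gfun (prodD μX (D i0))) _ _ hw0 hw1 hB
  have harith : 2^(l+1) * (2:ℝ)^(-((1/2+δ)*(l:ℝ))) * ε = (2:ℝ)^((1/2-δ)*(l:ℝ)+1) * ε := by
    congr 1
    rw [show ((2:ℝ)^(l+1) : ℝ) = (2:ℝ)^(((l+1 : ℕ)):ℝ) from (Real.rpow_natCast 2 (l+1)).symm]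
    rw [← Real.rpow_add two_pos]
    congr 1
    push_cast
    ring
  linarith [htri, h1, h2]


end
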